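/- Pointwise drift-diffusion lower bound on the mollifier generator, region K₁ᶜ: Let c ∈ (1/2, 1), r > 0, x₀, v, y ∈ ℝ^d, and suppose |(y − x₀)_k| ≤ √c · r and |(y − v)_k| ≤ √c r + M for some M > 0. Then with φ_r as above, −λ (y − v)_k ∂_{x_k} φ_r(y) ≥ −(2λ(√c r + M)√c / ((1−c)² r)) φ_r(y) and (σ²/2)(y − v)_k² ∂²_{x_k} φ_r(y) ≥ −(σ²(√c r + M)²(2c+1) / ((1−c)⁴ r²)) φ_r(y). -/

import Mathlib

set_option maxHeartbeats 1000000


open Finset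

/-- The product mollifier `φ_r(x) = ∏_k exp(1 − r²/(r² − (x−x₀)_k²))` on the open
`ℓ∞`-ball of radius `r` around `x₀`, extended by `0` outside. -/
noncomputable def moll {d : ℕ} (r : ℝ) (x₀ x : EuclideanSpace ℝ (Fin d)) : ℝ :=
  open Classical in
  if ∀ k, |(x - x₀) k| < r then
    ∏ k, Real.exp (1 - r ^ 2 / (r ^ 2 - ((x - x₀) k) ^ 2))
  else 0

noncomputable def gfun (r s : ℝ) : ℝ := Real.exp (1 - r ^ 2 / (r ^ 2 - s ^ 2))

noncomputable def hfun (r s : ℝ) : ℝ := -2 * r ^ 2 * s / (r ^ 2 - s ^ 2) ^ 2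

lemma hasDerivAt_gfun (r s : ℝ) (h : s ^ 2 < r ^ 2) :
    HasDerivAt (gfun r) (gfun r s * hfun r s) s := by
  have hne : r ^ 2 - s ^ 2 ≠ 0 := by nlinarith
  have h1 : HasDerivAt (fun u : ℝ => r ^ 2 - u ^ 2) (-(2 * s)) s := by
    simpa using ((hasDerivAt_pow 2 s).const_sub (r ^ 2))
  have h2 := (hasDerivAt_const s (r ^ 2)).div h1 hne
  have h4 := ((hasDerivAt_const s (1 : ℝ)).sub h2).exp
  convert h4 using 1
  · rfl
  unfold gfun hfun
  simp only [Pi.sub_apply, Pi.div_apply]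
  field_simp
  ring

lemma hasDerivAt_hfun (r s : ℝ) (h : s ^ 2 < r ^ 2) :
    HasDerivAt (hfun r) (-2 * r ^ 2 * (r ^ 2 + 3 * s ^ 2) / (r ^ 2 - s ^ 2) ^ 3) s := by
  have hpos : 0 < r ^ 2 - s ^ 2 := by nlinarith [sq_nonneg s]
  have hne : (r ^ 2 - s ^ 2) ^ 2 ≠ 0 := pow_ne_zero _ (ne_of_gt hpos)
  have h1 : HasDerivAt (fun u : ℝ => r ^ 2 - u ^ 2) (-(2 * s)) s := by
    simpa using ((hasDerivAt_pow 2 s).const_sub (r ^ 2))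
  have h2 : HasDerivAt (fun u : ℝ => (r ^ 2 - u ^ 2) ^ 2)
      ((2 : ℕ) * (r ^ 2 - s ^ 2) ^ 1 * (-(2 * s))) s := h1.pow 2
  have h3 : HasDerivAt (fun u : ℝ => -2 * r ^ 2 * u) (-2 * r ^ 2) s := by
    have h := (hasDerivAt_id s).const_mul (-2 * r ^ 2)
    rw [mul_one] at h
    exact h
  have h4 := h3.div h2 hne
  convert h4 using 1
  have hne' : r ^ 2 - s ^ 2 ≠ 0 := ne_of_gt hpos
  rotate_right
  field_simp
  ring
  all_goals rfl

lemma moll_eq {d : ℕ} (r : ℝ) (x₀ z : EuclideanSpace ℝ (Fin d))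
    (hz : ∀ j, |(z - x₀) j| < r) (k : Fin d) :
    moll r x₀ z
      = (∏ j ∈ Finset.univ.erase k, gfun r ((z - x₀) j)) * gfun r ((z - x₀) k) := by
  rw [moll, if_pos hz, ← Finset.prod_erase_mul _ _ (Finset.mem_univ k)]
  rfl

lemma moll_pos {d : ℕ} (r : ℝ) (x₀ z : EuclideanSpace ℝ (Fin d))
    (hz : ∀ j, |(z - x₀) j| < r) : 0 < moll r x₀ z := by
  rw [moll, if_pos hz]
  exact Finset.prod_pos fun _ _ => Real.exp_pos _

lemma coord {d : ℕ} (z x₀ : EuclideanSpace ℝ (Fin d)) (k j : Fin d) (t : ℝ) :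
    ((z + t • EuclideanSpace.single k 1 - x₀ : EuclideanSpace ℝ (Fin d))) j
      = (z - x₀) j + (if j = k then t else 0) := by
  simp [EuclideanSpace.single_apply]
  split <;> ring

lemma shifted_in {d : ℕ} (r : ℝ) (x₀ z : EuclideanSpace ℝ (Fin d)) (k : Fin d)
    (hz : ∀ j, |(z - x₀) j| < r) (t : ℝ) (ht : |t| < r - |(z - x₀) k|) :
    ∀ j, |((z + t • EuclideanSpace.single k 1 - x₀ : EuclideanSpace ℝ (Fin d))) j| < r := by
  intro j
  rw [coord]
  by_cases hjk : j = k
  · subst hjk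
    simp only [if_pos rfl]
    calc |(z - x₀) j + t| ≤ |(z - x₀) j| + |t| := abs_add_le _ _
      _ < r := by linarith
  · simp only [if_neg hjk, add_zero]
    exact hz j

lemma moll_shifted {d : ℕ} (r : ℝ) (x₀ z : EuclideanSpace ℝ (Fin d)) (k : Fin d)
    (hz : ∀ j, |(z - x₀) j| < r) (t : ℝ) (ht : |t| < r - |(z - x₀) k|) :
    moll r x₀ (z + t • EuclideanSpace.single k 1)
      = (∏ j ∈ Finset.univ.erase k, gfun r ((z - x₀) j)) * gfun r ((z - x₀) k + t) := by
  rw [moll_eq r x₀ _ (shifted_in r x₀ z k hz t ht) k]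
  congr 1
  · refine Finset.prod_congr rfl fun j hj => ?_
    rw [coord, if_neg (Finset.mem_erase.mp hj).1, add_zero]
  · rw [coord, if_pos rfl]

lemma lineDeriv_moll {d : ℕ} (r : ℝ) (hr : 0 < r) (x₀ z : EuclideanSpace ℝ (Fin d))
    (hz : ∀ j, |(z - x₀) j| < r) (k : Fin d) :
    lineDeriv ℝ (moll r x₀) z (EuclideanSpace.single k 1)
      = moll r x₀ z * hfun r ((z - x₀) k) := by
  set a := (z - x₀) k with ha
  set C := ∏ j ∈ Finset.univ.erase k, gfun r ((z - x₀) j) with hC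
  have hδ : 0 < r - |a| := by linarith [hz k]
  have hev : (fun t : ℝ => moll r x₀ (z + t • EuclideanSpace.single k 1))
      =ᶠ[nhds 0] fun t => C * gfun r (a + t) := by
    filter_upwards [Metric.ball_mem_nhds (0 : ℝ) hδ] with t ht
    have ht' : |t| < r - |a| := by simpa [Real.dist_eq] using ht
    exact moll_shifted r x₀ z k hz t ht'
  have hsq : a ^ 2 < r ^ 2 := by
    have h := abs_lt.mp (hz k)
    nlinarith [h.1, h.2]
  have hD : HasDerivAt (fun t : ℝ => C * gfun r (a + t)) (C * (gfun r a * hfun r a)) 0 := by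
    have hshift : HasDerivAt (fun t : ℝ => a + t) 1 0 := by
      simpa using (hasDerivAt_id (0 : ℝ)).const_add a
    have := ((hasDerivAt_gfun r (a + 0) (by simpa using hsq)).comp 0 hshift).const_mul C
    simpa using this
  have : lineDeriv ℝ (moll r x₀) z (EuclideanSpace.single k 1)
      = deriv (fun t : ℝ => moll r x₀ (z + t • EuclideanSpace.single k 1)) 0 := rfl
  rw [this, hev.deriv_eq, hD.deriv, moll_eq r x₀ z hz k, ← ha, ← hC]
  ring

lemma lineDeriv2_moll {d : ℕ} (r : ℝ) (hr : 0 < r) (x₀ y : EuclideanSpace ℝ (Fin d))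
    (hy : ∀ j, |(y - x₀) j| < r) (k : Fin d) :
    lineDeriv ℝ (fun z => lineDeriv ℝ (moll r x₀) z (EuclideanSpace.single k 1)) y
        (EuclideanSpace.single k 1)
      = moll r x₀ y * (hfun r ((y - x₀) k) ^ 2
          + -2 * r ^ 2 * (r ^ 2 + 3 * ((y - x₀) k) ^ 2) / (r ^ 2 - ((y - x₀) k) ^ 2) ^ 3) := by
  set a := (y - x₀) k with ha
  set C := ∏ j ∈ Finset.univ.erase k, gfun r ((y - x₀) j) with hC
  have hδ : 0 < r - |a| := by linarith [hy k]
  have hev : (fun t : ℝ =>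
        lineDeriv ℝ (moll r x₀) (y + t • EuclideanSpace.single k 1) (EuclideanSpace.single k 1))
      =ᶠ[nhds 0] fun t => C * (gfun r (a + t) * hfun r (a + t)) := by
    filter_upwards [Metric.ball_mem_nhds (0 : ℝ) hδ] with t ht
    have ht' : |t| < r - |a| := by simpa [Real.dist_eq] using ht
    have hin := shifted_in r x₀ y k hy t ht'
    rw [lineDeriv_moll r hr x₀ _ hin k, moll_shifted r x₀ y k hy t ht', coord, if_pos rfl,
      ← ha, ← hC]
    ring
  have hsq : a ^ 2 < r ^ 2 := by
    have h := abs_lt.mp (hy k)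
    nlinarith [h.1, h.2]
  have hshift : HasDerivAt (fun t : ℝ => a + t) 1 0 := by
    simpa using (hasDerivAt_id (0 : ℝ)).const_add a
  have hg : HasDerivAt (fun t : ℝ => gfun r (a + t)) (gfun r a * hfun r a) 0 := by
    have := (hasDerivAt_gfun r (a + 0) (by simpa using hsq)).comp 0 hshift
    simpa [Function.comp_def] using this
  have hh : HasDerivAt (fun t : ℝ => hfun r (a + t))
      (-2 * r ^ 2 * (r ^ 2 + 3 * a ^ 2) / (r ^ 2 - a ^ 2) ^ 3) 0 := by
    have := (hasDerivAt_hfun r (a + 0) (by simpa using hsq)).comp 0 hshift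
    simpa [Function.comp_def] using this
  have hD : HasDerivAt (fun t : ℝ => C * (gfun r (a + t) * hfun r (a + t)))
      (C * (gfun r a * hfun r a * hfun r a
        + gfun r a * (-2 * r ^ 2 * (r ^ 2 + 3 * a ^ 2) / (r ^ 2 - a ^ 2) ^ 3))) 0 := by
    have := (hg.mul hh).const_mul C
    convert this using 1
    rotate_right
    simp
    all_goals rfl
  have : lineDeriv ℝ (fun z => lineDeriv ℝ (moll r x₀) z (EuclideanSpace.single k 1)) y
      (EuclideanSpace.single k 1)
    = deriv (fun t : ℝ =>
        lineDeriv ℝ (moll r x₀) (y + t • EuclideanSpace.single k 1)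
          (EuclideanSpace.single k 1)) 0 := rfl
  rw [this, hev.deriv_eq, hD.deriv, moll_eq r x₀ y hy k, ← ha, ← hC]
  ring

/-- **drift-diffusion lower bound on region `K₁ᶜ`.**
For `c ∈ (1/2,1)`, `|(y−x₀)_k| ≤ √c r` and `|(y−v)_k| ≤ √c r + M`, one has
`−λ(y−v)_k ∂_{x_k}φ_r(y) ≥ −(2λ(√c r + M)√c/((1−c)² r)) φ_r(y)` and
`(σ²/2)(y−v)_k² ∂²_{x_k}φ_r(y) ≥ −(σ²(√c r + M)²(2c+1)/((1−c)⁴ r²)) φ_r(y)`. -/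
theorem stmt12 {d : ℕ} (c r lam σ M : ℝ)
    (hc : c ∈ Set.Ioo (1 / 2 : ℝ) 1) (hr : 0 < r) (hlam : 0 < lam) (hσ : 0 < σ)
    (hM : 0 < M) (x₀ v y : EuclideanSpace ℝ (Fin d))
    (hball : ∀ j, |(y - x₀) j| < r) (k : Fin d)
    (hk1 : |(y - x₀) k| ≤ Real.sqrt c * r)
    (hk2 : |(y - v) k| ≤ Real.sqrt c * r + M) :
    -lam * ((y - v) k) * lineDeriv ℝ (moll r x₀) y (EuclideanSpace.single k 1) ≥
      -(2 * lam * (Real.sqrt c * r + M) * Real.sqrt c / ((1 - c) ^ 2 * r)) *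
        moll r x₀ y ∧
    σ ^ 2 / 2 * ((y - v) k) ^ 2 *
        lineDeriv ℝ (fun z => lineDeriv ℝ (moll r x₀) z (EuclideanSpace.single k 1)) y
          (EuclideanSpace.single k 1) ≥
      -(σ ^ 2 * (Real.sqrt c * r + M) ^ 2 * (2 * c + 1) / ((1 - c) ^ 4 * r ^ 2)) *
        moll r x₀ y := by
  obtain ⟨hc1, hc2⟩ := hc
  set s := Real.sqrt c with hs
  set a := (y - x₀) k with ha
  set b := (y - v) k with hb
  have hc0 : (0 : ℝ) ≤ c := by linarith
  have hs0 : 0 ≤ s := Real.sqrt_nonneg c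
  have hs2 : s ^ 2 = c := Real.sq_sqrt hc0
  have h1c : 0 < 1 - c := by linarith
  have hφ : 0 < moll r x₀ y := moll_pos r x₀ y hball
  have ha2 : a ^ 2 ≤ c * r ^ 2 := by
    have := sq_abs a
    nlinarith [abs_nonneg a, hk1]
  have hb2 : b ^ 2 ≤ (s * r + M) ^ 2 := by
    have := sq_abs b
    nlinarith [abs_nonneg b, hk2]
  have hr2 : 0 < r ^ 2 := by positivity
  have hD : 0 < r ^ 2 - a ^ 2 := by nlinarith [mul_pos h1c hr2, ha2]
  have hDle : (1 - c) * r ^ 2 ≤ r ^ 2 - a ^ 2 := by nlinarith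
  have hBpos : 0 < s * r + M := by
    have := mul_nonneg hs0 hr.le
    linarith
  constructor
  · rw [lineDeriv_moll r hr x₀ y hball k, ← ha]
    have hba : -((s * r + M) * (s * r)) ≤ b * a := by
      have h1 : |b| * |a| ≤ (s * r + M) * (s * r) :=
        mul_le_mul hk2 hk1 (abs_nonneg a) (le_of_lt hBpos)
      have h2 := neg_abs_le (b * a)
      rw [abs_mul] at h2
      linarith
    have hDsq : ((1 - c) * r ^ 2) ^ 2 ≤ (r ^ 2 - a ^ 2) ^ 2 :=
      pow_le_pow_left₀ (by positivity) hDle 2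
    have key : -(2 * lam * (s * r + M) * s / ((1 - c) ^ 2 * r))
        ≤ -lam * b * hfun r a := by
      have heq : -lam * b * hfun r a = 2 * lam * r ^ 2 * (b * a) / ((r ^ 2 - a ^ 2) ^ 2) := by
        unfold hfun; ring
      rw [heq, ← neg_div]
      rw [div_le_div_iff₀ (by positivity) (by positivity)]
      have hfac : 0 ≤ 2 * lam * (s * r + M) * s := by positivity
      have e1 : -(2 * lam * (s * r + M) * s) * (r ^ 2 - a ^ 2) ^ 2
          ≤ -(2 * lam * (s * r + M) * s) * (((1 - c) * r ^ 2) ^ 2) :=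
        mul_le_mul_of_nonpos_left hDsq (neg_nonpos_of_nonneg hfac)
      have e2 : (2 * lam * r ^ 2 * ((1 - c) ^ 2 * r)) * (-((s * r + M) * (s * r)))
          ≤ (2 * lam * r ^ 2 * ((1 - c) ^ 2 * r)) * (b * a) :=
        mul_le_mul_of_nonneg_left hba (by positivity)
      linarith [e1, e2]
    calc -(2 * lam * (s * r + M) * s / ((1 - c) ^ 2 * r)) * moll r x₀ y
        ≤ (-lam * b * hfun r a) * moll r x₀ y :=
          mul_le_mul_of_nonneg_right key hφ.le
      _ = -lam * b * (moll r x₀ y * hfun r a) := by ring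
  · rw [lineDeriv2_moll r hr x₀ y hball k, ← ha]
    set h' := -2 * r ^ 2 * (r ^ 2 + 3 * a ^ 2) / (r ^ 2 - a ^ 2) ^ 3 with hh'
    have hD3 : ((1 - c) * r ^ 2) ^ 3 ≤ (r ^ 2 - a ^ 2) ^ 3 :=
      pow_le_pow_left₀ (by positivity) hDle 3
    have hcross : σ ^ 2 * b ^ 2 * r ^ 2 * (r ^ 2 + 3 * a ^ 2) * ((1 - c) ^ 4 * r ^ 2)
        ≤ σ ^ 2 * (s * r + M) ^ 2 * (2 * c + 1) * ((r ^ 2 - a ^ 2) ^ 3) := by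
      have step1 : σ ^ 2 * b ^ 2 * r ^ 2 * (r ^ 2 + 3 * a ^ 2) * ((1 - c) ^ 4 * r ^ 2)
          ≤ σ ^ 2 * (s * r + M) ^ 2 * r ^ 2 * ((1 + 3 * c) * r ^ 2) * ((1 - c) ^ 4 * r ^ 2) := by
        have g1 : r ^ 2 + 3 * a ^ 2 ≤ (1 + 3 * c) * r ^ 2 := by nlinarith
        have g0 : 0 ≤ r ^ 2 + 3 * a ^ 2 := by positivity
        gcongr
      have step2 : σ ^ 2 * (s * r + M) ^ 2 * r ^ 2 * ((1 + 3 * c) * r ^ 2) * ((1 - c) ^ 4 * r ^ 2)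
          ≤ σ ^ 2 * (s * r + M) ^ 2 * (2 * c + 1) * (((1 - c) * r ^ 2) ^ 3) := by
        have g2 : (1 + 3 * c) * (1 - c) ^ 4 ≤ (2 * c + 1) * (1 - c) ^ 3 := by
          nlinarith [mul_nonneg (pow_pos h1c 3).le (sq_nonneg c)]
        nlinarith [mul_le_mul_of_nonneg_left g2
          (by positivity : (0:ℝ) ≤ σ ^ 2 * (s * r + M) ^ 2 * r ^ 6)]
      have step3 : σ ^ 2 * (s * r + M) ^ 2 * (2 * c + 1) * (((1 - c) * r ^ 2) ^ 3)
          ≤ σ ^ 2 * (s * r + M) ^ 2 * (2 * c + 1) * ((r ^ 2 - a ^ 2) ^ 3) := by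
        have hnn : (0:ℝ) ≤ σ ^ 2 * (s * r + M) ^ 2 * (2 * c + 1) := by positivity
        nlinarith [mul_le_mul_of_nonneg_left hD3 hnn]
      linarith
    have hdiv : σ ^ 2 * b ^ 2 * r ^ 2 * (r ^ 2 + 3 * a ^ 2) / ((r ^ 2 - a ^ 2) ^ 3)
        ≤ σ ^ 2 * (s * r + M) ^ 2 * (2 * c + 1) / ((1 - c) ^ 4 * r ^ 2) :=
      (div_le_div_iff₀ (by positivity) (by positivity)).mpr hcross
    have key2' : -(σ ^ 2 * (s * r + M) ^ 2 * (2 * c + 1) / ((1 - c) ^ 4 * r ^ 2))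
        ≤ σ ^ 2 / 2 * b ^ 2 * h' := by
      have heq : σ ^ 2 / 2 * b ^ 2 * h'
          = -(σ ^ 2 * b ^ 2 * r ^ 2 * (r ^ 2 + 3 * a ^ 2) / ((r ^ 2 - a ^ 2) ^ 3)) := by
        rw [hh']; field_simp
      rw [heq]
      linarith
    have hterm : σ ^ 2 / 2 * b ^ 2 * h' ≤ σ ^ 2 / 2 * b ^ 2 * (hfun r a ^ 2 + h') := by
      nlinarith [mul_nonneg (mul_nonneg (by positivity : (0:ℝ) ≤ σ ^ 2 / 2) (sq_nonneg b))
        (sq_nonneg (hfun r a))]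
    calc -(σ ^ 2 * (s * r + M) ^ 2 * (2 * c + 1) / ((1 - c) ^ 4 * r ^ 2)) * moll r x₀ y
        ≤ (σ ^ 2 / 2 * b ^ 2 * (hfun r a ^ 2 + h')) * moll r x₀ y :=
          mul_le_mul_of_nonneg_right (le_trans key2' hterm) hφ.le
      _ = σ ^ 2 / 2 * b ^ 2 * (moll r x₀ y * (hfun r a ^ 2 + h')) := by ring
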